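/- Let p, q, k be three distinct atoms in 𝒫. For all weights w, w₁, w₂ (each a real number or α), the LP^MLN program {w : (p → q) → k} is not strongly equivalent to the LP^MLN program {w₁ : (q ∨ ¬p) → k, w₂ : k ∨ p ∨ ¬q}. -/

import Mathlib

namespace LPMLN

/-- Propositional formulas over a set of atoms `P`, built from atoms and `⊥`
using `∧`, `∨`, `→`. -/
inductive Formula (P : Type) : Type where
  | atom : P → Formula P
  | bot  : Formula P
  | and  : Formula P → Formula P → Formula P
  | or   : Formula P → Formula P → Formula P
  | imp  : Formula P → Formula P → Formula P
deriving DecidableEq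

variable {P : Type} [DecidableEq P]

/-- `¬F` abbreviates `F → ⊥`. -/
def Formula.neg (F : Formula P) : Formula P := .imp F .bot

/-- Classical evaluation of a formula in an interpretation `X ⊆ P`. -/
def Formula.eval (X : Finset P) : Formula P → Bool
  | .atom p => decide (p ∈ X)
  | .bot => false
  | .and F G => F.eval X && G.eval X
  | .or F G => F.eval X || G.eval X
  | .imp F G => !(F.eval X) || G.eval X

/-- Classical satisfaction `X ⊨ F`. -/
def Formula.sat (X : Finset P) (F : Formula P) : Prop := F.eval X = true

/-- The reduct `F^X`: every maximal subformula not satisfied by `X` is replaced by `⊥`. -/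
def Formula.reduct (X : Finset P) : Formula P → Formula P
  | .atom p => if p ∈ X then .atom p else .bot
  | .bot => .bot
  | .and F G => if (Formula.and F G).eval X then .and (F.reduct X) (G.reduct X) else .bot
  | .or F G => if (Formula.or F G).eval X then .or (F.reduct X) (G.reduct X) else .bot
  | .imp F G => if (Formula.imp F G).eval X then .imp (F.reduct X) (G.reduct X) else .bot

/-- `X` satisfies a (finite) set of formulas. -/
def satSet (X : Finset P) (Γ : Finset (Formula P)) : Prop := ∀ F ∈ Γ, F.sat X

/-- The reduct `Γ^X` of a finite set of formulas. -/
def reductSet (X : Finset P) (Γ : Finset (Formula P)) : Finset (Formula P) :=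
  Γ.image (Formula.reduct X)

/-- `X` is a stable model of `Γ` if `X ⊨ Γ^X` and no proper subset of `X` satisfies `Γ^X`. -/
def StableModel (Γ : Finset (Formula P)) (X : Finset P) : Prop :=
  satSet X (reductSet X Γ) ∧ ∀ Y, Y ⊂ X → ¬ satSet Y (reductSet X Γ)

/-- A weight is a real number (soft) or the symbol `α` (hard). -/
inductive Weight : Type where
  | soft : ℝ → Weight
  | hard : Weight

noncomputable instance : DecidableEq Weight := Classical.decEq _

/-- An LP^MLN program: a finite set of weighted formulas `w : R`. -/
abbrev Program (P : Type) [DecidableEq P] := Finset (Weight × Formula P)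

/-- `𝔽_X`: the weighted formulas of `𝔽` whose formula is satisfied by `X`. -/
noncomputable def progSat (𝔽 : Program P) (X : Finset P) : Program P :=
  𝔽.filter (fun r => r.2.eval X = true)

/-- `𝔽̄`: the formulas of `𝔽`, with weights dropped. -/
noncomputable def formulas (𝔽 : Program P) : Finset (Formula P) := 𝔽.image Prod.snd

/-- `X` is a soft stable model of `𝔽` (i.e. `X ∈ SM[𝔽]`) if `X` is a stable model of `𝔽̄_X`. -/
def SoftStable (𝔽 : Program P) (X : Finset P) : Prop :=
  StableModel (formulas (progSat 𝔽 X)) X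

/-- w-expressions: either zero or a formal expression `e^{c₁ + c₂·α}` with `c₁ : ℝ`, `c₂ : ℤ`. -/
inductive WExpr : Type where
  | zero : WExpr
  | exp : ℝ → ℤ → WExpr

/-- Multiplication of w-expressions: add exponents componentwise; zero is absorbing. -/
def WExpr.mul : WExpr → WExpr → WExpr
  | .zero, _ => .zero
  | _, .zero => .zero
  | .exp a b, .exp c d => .exp (a + c) (b + d)

/-- Inverse of a w-expression: negate both exponents. -/
def WExpr.inv : WExpr → WExpr
  | .zero => .zero
  | .exp a b => .exp (-a) (-b)

/-- Evaluation of a w-expression at a real number `a`. -/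
noncomputable def WExpr.eval (a : ℝ) : WExpr → ℝ
  | .zero => 0
  | .exp c₁ c₂ => Real.exp (c₁ + c₂ * a)

/-- The real contribution of a weight (hard rules contribute `0` to the soft sum). -/
def softWeight : Weight → ℝ
  | .soft r => r
  | .hard => 0

/-- Sum of the weights of the soft rules of `𝔽`. -/
noncomputable def softSum (𝔽 : Program P) : ℝ := ∑ r ∈ 𝔽, softWeight r.1

/-- The number of hard rules of `𝔽`. -/
noncomputable def hardCount (𝔽 : Program P) : ℤ :=
  ((𝔽.filter (fun r => r.1 = Weight.hard)).card : ℤ)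

/-- `TW(𝔽) = e^{c₁ + c₂·α}` where `c₁` is the sum of the soft weights and
`c₂` the number of hard rules. -/
noncomputable def TW (𝔽 : Program P) : WExpr := .exp (softSum 𝔽) (hardCount 𝔽)

open Classical in
/-- `W_𝔽(X) = TW(𝔽_X)` if `X ∈ SM[𝔽]`, and zero otherwise. -/
noncomputable def W (𝔽 : Program P) (X : Finset P) : WExpr :=
  if SoftStable 𝔽 X then TW (progSat 𝔽 X) else .zero

open Classical in
/-- `W^pnt_𝔽(X) = TW(𝔽 \ 𝔽_X)⁻¹` if `X ∈ SM[𝔽]`, and zero otherwise. -/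
noncomputable def Wpnt (𝔽 : Program P) (X : Finset P) : WExpr :=
  if SoftStable 𝔽 X then (TW (𝔽 \ progSat 𝔽 X)).inv else .zero

/-- `P_𝔽(X)`: the limit as `a → ∞` of the normalized evaluation of `W_𝔽(X)`. -/
noncomputable def Pr [Fintype P] (𝔽 : Program P) (X : Finset P) : ℝ :=
  Filter.limUnder Filter.atTop
    (fun a : ℝ => (W 𝔽 X).eval a / ∑ Y : Finset P, (W 𝔽 Y).eval a)

/-- `P^pnt_𝔽(X)`: the limit as `a → ∞` of the normalized evaluation of `W^pnt_𝔽(X)`. -/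
noncomputable def PrPnt [Fintype P] (𝔽 : Program P) (X : Finset P) : ℝ :=
  Filter.limUnder Filter.atTop
    (fun a : ℝ => (Wpnt 𝔽 X).eval a / ∑ Y : Finset P, (Wpnt 𝔽 Y).eval a)

/-- Weak equivalence: the same probability distribution. -/
def WeakEquiv [Fintype P] (𝔽 𝔾 : Program P) : Prop :=
  ∀ X : Finset P, Pr 𝔽 X = Pr 𝔾 X

/-- Strong equivalence of LP^MLN programs. -/
def StrongEquiv [Fintype P] (𝔽 𝔾 : Program P) : Prop :=
  ∀ (ℍ : Program P) (X : Finset P), Pr (𝔽 ∪ ℍ) X = Pr (𝔾 ∪ ℍ) X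

/-- Structural equivalence of LP^MLN programs. -/
def StructEquiv (𝔽 𝔾 : Program P) : Prop :=
  ∀ (ℍ : Program P) (X : Finset P), SoftStable (𝔽 ∪ ℍ) X ↔ SoftStable (𝔾 ∪ ℍ) X

/-- HT satisfaction `⟨Y,X⟩ ⊨ₕₜ F` (at the world "here"). -/
def htSat (Y X : Finset P) : Formula P → Prop
  | .atom p => p ∈ Y
  | .bot => False
  | .and F G => htSat Y X F ∧ htSat Y X G
  | .or F G => htSat Y X F ∨ htSat Y X G
  | .imp F G => (htSat Y X F → htSat Y X G) ∧ (Formula.imp F G).sat X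

/-- `⟨Y,X⟩` is an HT model of a set `Γ` of formulas. -/
def HTModel (Γ : Finset (Formula P)) (Y X : Finset P) : Prop :=
  Y ⊆ X ∧ ∀ F ∈ Γ, htSat Y X F

/-- `⟨Y,X⟩` is a soft HT model of an LP^MLN program `𝔽`. -/
def SoftHT (𝔽 : Program P) (Y X : Finset P) : Prop :=
  Y ⊆ X ∧ ∀ r ∈ progSat 𝔽 X, htSat Y X r.2

/-- The choice formula `{F}^ch = F ∨ ¬F`. -/
def Formula.ch (F : Formula P) : Formula P := .or F F.neg

/-- `{Γ}^ch`, choice formulas of a set of formulas. -/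
def chSet (Γ : Finset (Formula P)) : Finset (Formula P) := Γ.image Formula.ch

/-- Renaming of atoms. -/
def Formula.rename {Q : Type} (f : P → Q) : Formula P → Formula Q
  | .atom p => .atom (f p)
  | .bot => .bot
  | .and F G => .and (F.rename f) (G.rename f)
  | .or F G => .or (F.rename f) (G.rename f)
  | .imp F G => .imp (F.rename f) (G.rename f)

/-- `Δ_{𝒫'}(F)`, a formula over `𝒫 ∪ 𝒫'`; unprimed atoms are `Sum.inl p`,
primed atoms `p'` are `Sum.inr p`. -/
def Formula.delta : Formula P → Formula (P ⊕ P)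
  | .atom p => .atom (Sum.inr p)
  | .bot => .bot
  | .and F G => .and F.delta G.delta
  | .or F G => .or F.delta G.delta
  | .imp F G => .and (.imp F.delta G.delta)
      (.imp (F.rename Sum.inl) (G.rename Sum.inl))

/-- `Δ_{𝒫'}(Γ)` for a set of formulas. -/
def deltaSet (Γ : Finset (Formula P)) : Finset (Formula (P ⊕ P)) :=
  Γ.image Formula.delta

/-- The interpretation `Y' ∪ X` of `𝒫 ∪ 𝒫'`. -/
def primedInterp (Y X : Finset P) : Finset (P ⊕ P) :=
  X.image Sum.inl ∪ Y.image Sum.inr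



open Filter

set_option maxHeartbeats 1000000

/-- for distinct atoms `p, q, k`, the program `{w : (p → q) → k}` is not
strongly equivalent to `{w₁ : (q ∨ ¬p) → k, w₂ : k ∨ p ∨ ¬q}`, for any weights. -/
theorem stmt8 {P : Type} [DecidableEq P] [Fintype P] (p q k : P)
    (hpq : p ≠ q) (hpk : p ≠ k) (hqk : q ≠ k) (w w₁ w₂ : Weight) :
    ¬ StrongEquiv
        ({(w, Formula.imp (Formula.imp (.atom p) (.atom q)) (.atom k))} : Program P)
        ({(w₁, Formula.imp (Formula.or (.atom q) (Formula.neg (.atom p))) (.atom k)),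
          (w₂, Formula.or (.atom k) (Formula.or (.atom p) (Formula.neg (.atom q))))} :
          Program P) := by
  intro hSE
  classical
  set F0 : Formula P := Formula.imp (Formula.imp (.atom p) (.atom q)) (.atom k) with hF0
  set R1 : Formula P := Formula.imp (Formula.or (.atom q) (Formula.neg (.atom p))) (.atom k) with hR1d
  set R2 : Formula P := Formula.or (.atom k) (Formula.or (.atom p) (Formula.neg (.atom q))) with hR2d
  set X : Finset P := {p, q} with hX
  set r3 : Weight × Formula P := (Weight.hard, Formula.atom q) with hr3
  set r4 : Weight × Formula P := (Weight.hard, Formula.neg (Formula.atom k)) with hr4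
  set H : Program P := {r3, r4} with hH
  have hpX : p ∈ X := by simp [hX]
  have hqX : q ∈ X := by simp [hX]
  have hkX : k ∉ X := by simp [hX, Ne.symm hpk, Ne.symm hqk]
  have e1X : R1.eval X = false := by
    simp [hR1d, Formula.eval, Formula.neg, hpX, hqX, hkX]
  have e2X : R2.eval X = true := by
    simp [hR2d, Formula.eval, Formula.neg, hpX, hqX, hkX]
  have e3X : (Formula.atom q).eval X = true := by simp [Formula.eval, hqX]
  have e4X : (Formula.neg (Formula.atom k)).eval X = true := by
    simp [Formula.eval, Formula.neg, hkX]
  have eFX : F0.eval X = false := by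
    simp [hF0, Formula.eval, hpX, hqX, hkX]
  -- L1 : X is not a soft stable model of F ∪ H
  have L1 : ¬ SoftStable ({(w, F0)} ∪ H) X := by
    rintro ⟨-, hmin⟩
    apply hmin {q}
    · constructor
      · intro x hx; simp at hx; simp [hX, hx]
      · intro hsub
        have := hsub hpX
        simp [hpq] at this
    · intro G hG
      simp only [reductSet, formulas, progSat, Finset.mem_image, Finset.mem_filter,
        Finset.mem_union, Finset.mem_insert, Finset.mem_singleton, hH] at hG
      obtain ⟨Fm, ⟨r, ⟨hr, hre⟩, hsnd⟩, hred⟩ := hG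
      rcases hr with hr | hr | hr
      · rw [hr] at hre; simp [eFX] at hre
      · rw [hr] at hsnd
        subst hsnd
        rw [← hred]
        simp [hr3, Formula.sat, Formula.reduct, hqX, Formula.eval]
      · rw [hr] at hsnd
        subst hsnd
        rw [← hred]
        simp [hr4, Formula.sat, Formula.reduct, Formula.neg, Formula.eval, hkX]
  set GH : Program P := {(w₁, R1), (w₂, R2)} ∪ H with hGH
  -- membership characterization of the reduct set of GH at X
  have hred2 : R2.reduct X = Formula.or .bot (.or (.atom p) .bot) := by
    simp [hR2d, Formula.reduct, Formula.eval, Formula.neg, hpX, hqX, hkX]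
  have hred3 : (Formula.atom q).reduct X = Formula.atom q := by
    simp [Formula.reduct, hqX]
  have hred4 : (Formula.neg (Formula.atom k)).reduct X = Formula.imp .bot .bot := by
    simp [Formula.reduct, Formula.neg, Formula.eval, hkX]
  have hmem : ∀ G : Formula P,
      G ∈ reductSet X (formulas (progSat GH X)) ↔
        (G = Formula.or .bot (.or (.atom p) .bot) ∨ G = Formula.atom q ∨
          G = Formula.imp .bot .bot) := by
    intro G
    constructor
    · intro hG
      simp only [reductSet, formulas, progSat, Finset.mem_image, Finset.mem_filter,
        Finset.mem_union, Finset.mem_insert, Finset.mem_singleton, hGH, hH] at hG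
      obtain ⟨Fm, ⟨r, ⟨hr, hre⟩, hsnd⟩, hred⟩ := hG
      subst hsnd; subst hred
      rcases hr with (hr | hr) | (hr | hr) <;> subst hr
      · simp [e1X] at hre
      · rw [hred2]; tauto
      · rw [hr3, hred3]; tauto
      · rw [hr4, hred4]; tauto
    · intro hG
      simp only [reductSet, formulas, progSat, Finset.mem_image, Finset.mem_filter,
        Finset.mem_union, Finset.mem_insert, Finset.mem_singleton, hGH, hH]
      rcases hG with hG | hG | hG
      · exact ⟨R2, ⟨(w₂, R2), ⟨Or.inl (Or.inr rfl), e2X⟩, rfl⟩, by rw [hred2, hG]⟩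
      · exact ⟨Formula.atom q, ⟨r3, ⟨Or.inr (Or.inl rfl), e3X⟩, rfl⟩, by rw [hred3, hG]⟩
      · exact ⟨Formula.neg (Formula.atom k), ⟨r4, ⟨Or.inr (Or.inr rfl), e4X⟩, rfl⟩,
          by rw [hred4, hG]⟩
  have L2 : SoftStable GH X := by
    constructor
    · intro G hG
      rcases (hmem G).mp hG with hG | hG | hG <;> subst hG <;>
        simp [Formula.sat, Formula.eval, hpX, hqX]
    · intro Y hY hsatY
      have hp : p ∈ Y := by
        have := hsatY _ ((hmem _).mpr (Or.inl rfl))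
        simpa [Formula.sat, Formula.eval] using this
      have hq : q ∈ Y := by
        have := hsatY _ ((hmem _).mpr (Or.inr (Or.inl rfl)))
        simpa [Formula.sat, Formula.eval] using this
      have hsub : X ⊆ Y := by
        rw [hX]; exact Finset.insert_subset hp (Finset.singleton_subset_iff.mpr hq)
      exact (Finset.ssubset_iff_subset_ne.mp hY).2 (Finset.Subset.antisymm hY.subset hsub)
  have hmemGH : ∀ r : Weight × Formula P,
      r ∈ GH ↔ ((r = (w₁, R1) ∨ r = (w₂, R2)) ∨ (r = r3 ∨ r = r4)) := by
    intro r; simp [hGH, hH, Finset.mem_union]; tauto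
  have hmemT : ∀ Z : Finset P, ∀ r : Weight × Formula P,
      r ∈ (progSat GH Z).filter (fun r => r.1 = Weight.hard) ↔
        (r ∈ GH ∧ r.2.eval Z = true ∧ r.1 = Weight.hard) := by
    intro Z r; simp [progSat, Finset.mem_filter, and_assoc]
  have hhc : ∀ Y : Finset P, hardCount (progSat GH Y) ≤ hardCount (progSat GH X) := by
    intro Y
    simp only [hardCount]
    rw [Nat.cast_le]
    set TX := (progSat GH X).filter (fun r => r.1 = Weight.hard) with hTXd
    set TY := (progSat GH Y).filter (fun r => r.1 = Weight.hard) with hTYd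
    have hr3X : r3 ∈ TX := (hmemT X r3).mpr ⟨by simp [hmemGH], e3X, by rw [hr3]⟩
    have hr4X : r4 ∈ TX := (hmemT X r4).mpr ⟨by simp [hmemGH], e4X, by rw [hr4]⟩
    have hr2X : ∀ r : Weight × Formula P, r = (w₂, R2) → r.1 = Weight.hard → r ∈ TX := by
      intro r hre hrh
      exact (hmemT X r).mpr ⟨by simp [hmemGH, hre], by rw [hre]; exact e2X, hrh⟩
    by_cases h1 : (w₁, R1) ∈ TY
    · have hre1 : R1.eval Y = true := ((hmemT Y _).mp h1).2.1
      have hqk' : q ∈ Y → k ∈ Y := by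
        intro hqY
        by_contra hkY
        rw [hR1d] at hre1
        simp [Formula.eval, Formula.neg, hqY, hkY] at hre1
      obtain ⟨j, hjX, hjY⟩ : ∃ j, j ∈ TX ∧ j ∉ TY := by
        by_cases hqY : q ∈ Y
        · refine ⟨r4, hr4X, fun hc => ?_⟩
          have := ((hmemT Y r4).mp hc).2.1
          rw [hr4] at this
          simp [Formula.eval, Formula.neg, hqk' hqY] at this
        · refine ⟨r3, hr3X, fun hc => ?_⟩
          have := ((hmemT Y r3).mp hc).2.1
          rw [hr3] at this
          simp [Formula.eval, hqY] at this
      have hsub : TY ⊆ insert (w₁, R1) (TX.erase j) := by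
        intro r hr
        have hrj : r ≠ j := fun he => hjY (he ▸ hr)
        obtain ⟨hrGH, hreY, hrh⟩ := (hmemT Y r).mp hr
        rcases (hmemGH r).mp hrGH with (h | h) | (h | h)
        · rw [h]; exact Finset.mem_insert_self _ _
        · exact Finset.mem_insert_of_mem (Finset.mem_erase.mpr ⟨hrj, hr2X r h hrh⟩)
        · exact Finset.mem_insert_of_mem (Finset.mem_erase.mpr ⟨hrj, h ▸ hr3X⟩)
        · exact Finset.mem_insert_of_mem (Finset.mem_erase.mpr ⟨hrj, h ▸ hr4X⟩)
      calc TY.card ≤ (insert (w₁, R1) (TX.erase j)).card := Finset.card_le_card hsub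
        _ ≤ (TX.erase j).card + 1 := Finset.card_insert_le _ _
        _ = TX.card - 1 + 1 := by rw [Finset.card_erase_of_mem hjX]
        _ = TX.card := Nat.succ_pred_eq_of_pos (Finset.card_pos.mpr ⟨j, hjX⟩)
    · apply Finset.card_le_card
      intro r hr
      obtain ⟨hrGH, hreY, hrh⟩ := (hmemT Y r).mp hr
      rcases (hmemGH r).mp hrGH with (h | h) | (h | h)
      · exact absurd (h ▸ hr) h1
      · exact hr2X r h hrh
      · exact h ▸ hr3X
      · exact h ▸ hr4X
  have hW_X : W GH X = WExpr.exp (softSum (progSat GH X)) (hardCount (progSat GH X)) := by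
    unfold W
    rw [if_pos L2]
    rfl
  set σ := softSum (progSat GH X) with hσ
  set m := hardCount (progSat GH X) with hm
  have hNpos : ∀ a : ℝ, 0 < (W GH X).eval a := by
    intro a; rw [hW_X]; exact Real.exp_pos _
  have hterm : ∀ Y : Finset P, ∃ L : ℝ, 0 ≤ L ∧
      Tendsto (fun a => (W GH Y).eval a / (W GH X).eval a) atTop (nhds L) := by
    intro Y
    rcases hWY : W GH Y with _ | ⟨s', c'⟩
    · refine ⟨0, le_refl _, ?_⟩
      have hz : (fun a => (WExpr.zero : WExpr).eval a / (W GH X).eval a) = fun _ => (0:ℝ) := by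
        funext a; simp [WExpr.eval]
      rw [hz]; exact tendsto_const_nhds
    · have hss : SoftStable GH Y := by
        by_contra hcon
        unfold W at hWY
        rw [if_neg hcon] at hWY
        exact WExpr.noConfusion hWY
      have hc' : c' = hardCount (progSat GH Y) := by
        unfold W at hWY
        rw [if_pos hss] at hWY
        unfold TW at hWY
        injection hWY with h1 h2
        exact h2.symm
      have hcm : c' ≤ m := hc' ▸ hhc Y
      have hfun : ∀ a : ℝ, (WExpr.exp s' c').eval a / (W GH X).eval a
          = Real.exp ((s' - σ) + ((c' : ℝ) - (m : ℝ)) * a) := by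
        intro a
        rw [hW_X]
        simp only [WExpr.eval, ← hσ, ← hm]
        rw [← Real.exp_sub]
        congr 1
        ring
      rcases lt_or_eq_of_le hcm with hlt | heq
      · refine ⟨0, le_refl _, ?_⟩
        have hcoef : ((c' : ℝ) - m) < 0 := by
          have h2 : (c' : ℝ) < (m : ℝ) := by exact_mod_cast hlt
          linarith
        have hlin : Tendsto (fun a : ℝ => (s' - σ) + ((c':ℝ) - m) * a) atTop atBot :=
          tendsto_atBot_add_const_left _ _ ((tendsto_const_mul_atBot_of_neg hcoef).mpr tendsto_id)
        have hexp := Real.tendsto_exp_atBot.comp hlin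
        exact hexp.congr fun a => (hfun a).symm
      · refine ⟨Real.exp (s' - σ), (Real.exp_pos _).le, ?_⟩
        have hcst : ∀ a : ℝ, (WExpr.exp s' c').eval a / (W GH X).eval a = Real.exp (s' - σ) := by
          intro a; rw [hfun a, heq]; simp
        exact Tendsto.congr (fun a => (hcst a).symm) tendsto_const_nhds
  choose Lf hL0 hLt using hterm
  have hLX : Lf X = 1 := by
    have hconst : Tendsto (fun a : ℝ => (W GH X).eval a / (W GH X).eval a) atTop (nhds 1) := by
      have he : (fun a : ℝ => (W GH X).eval a / (W GH X).eval a) = fun _ => (1:ℝ) := by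
        funext a; exact div_self (hNpos a).ne'
      rw [he]; exact tendsto_const_nhds
    exact tendsto_nhds_unique (hLt X) hconst
  set L : ℝ := ∑ Y : Finset P, Lf Y with hL
  have hL1 : (1:ℝ) ≤ L := by
    rw [hL, ← hLX]
    exact Finset.single_le_sum (fun Y _ => hL0 Y) (Finset.mem_univ X)
  have hsum : Tendsto (fun a => ∑ Y : Finset P, (W GH Y).eval a / (W GH X).eval a)
      atTop (nhds L) := tendsto_finset_sum _ fun Y _ => hLt Y
  have hratio : ∀ a : ℝ, (W GH X).eval a / (∑ Y : Finset P, (W GH Y).eval a)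
      = (∑ Y : Finset P, (W GH Y).eval a / (W GH X).eval a)⁻¹ := by
    intro a
    rw [← Finset.sum_div, inv_div]
  have hPrG : Pr GH X = L⁻¹ := by
    unfold Pr
    apply Tendsto.limUnder_eq
    have hinv := hsum.inv₀ (by linarith : L ≠ 0)
    exact hinv.congr fun a => (hratio a).symm
  have hPrF : Pr ({(w, F0)} ∪ H) X = 0 := by
    unfold Pr
    have hWF : W ({(w, F0)} ∪ H) X = WExpr.zero := by
      unfold W; rw [if_neg L1]
    have hz : (fun a : ℝ => (W ({(w, F0)} ∪ H) X).eval a /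
        ∑ Y : Finset P, (W ({(w, F0)} ∪ H) Y).eval a) = fun _ => (0:ℝ) := by
      funext a; rw [hWF]; simp [WExpr.eval]
    rw [hz]
    exact tendsto_const_nhds.limUnder_eq
  have hfin := hSE H X
  rw [hPrF, hPrG] at hfin
  exact (inv_ne_zero (by linarith : L ≠ 0)) hfin.symm

end LPMLN
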